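/- In the simplex setting with m ≥ 4, the element X_m = Σ_{σ∈A_m} ( σ(Δ_{m−1}) · Σ_{τ∈A_m, τ≠σ} τ(Δ_{m−1}) ) satisfies X_m = α_m·Sq_m + β_m·Adj_m + γ_m·Op_m, where α_m = h_m(h_m − 1), β_m = h_m(h_m − (m−3)/(m−2)), and γ_m = h_m(h_m − (m−4)/(m−2)), with h_m = (m−2)·(m−1)!/2. -/

import Mathlib

set_option maxHeartbeats 1000000


noncomputable section
open scoped Classical

/-- The Laplacian `Δ = |S|·1 - Σ_{s ∈ S} s` in the real group algebra `ℝ[G]`. -/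
def lap {G : Type*} [Group G] (S : Finset G) : MonoidAlgebra ℝ G :=
  (S.card : MonoidAlgebra ℝ G) - ∑ s ∈ S, MonoidAlgebra.of ℝ G s

/-- The star involution on `ℝ[G]` induced by `g ↦ g⁻¹`. -/
def starG {G : Type*} [Group G] (x : MonoidAlgebra ℝ G) : MonoidAlgebra ℝ G :=
  MonoidAlgebra.mapDomain (fun g => g⁻¹) x

/-- `g` lies in the ball of radius `R` about the identity in the word metric
induced by the (symmetric) set `S`. -/
def inBall {G : Type*} [Group G] (S : Set G) (R : ℕ) (g : G) : Prop :=
  ∃ l : List G, (∀ x ∈ l, x ∈ S) ∧ l.length ≤ R ∧ l.prod = g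

/-- `x ∈ Σ²_R ℝ[G]`: `x` is a finite sum of hermitian squares `ξ_i* ξ_i` with each
`ξ_i` supported in the ball of radius `R` about the identity. -/
def SOS {G : Type*} [Group G] (S : Set G) (R : ℕ) (x : MonoidAlgebra ℝ G) : Prop :=
  ∃ (N : ℕ) (ξ : Fin N → MonoidAlgebra ℝ G),
    (∀ i, ∀ g ∈ (ξ i).coeff.support, inBall S R g) ∧
    x = ∑ i, starG (ξ i) * ξ i

/-- The simplex setting: a group `G` with a finite symmetric generating set `S`
(with `1 ∉ S`), an action of the alternating group `A_m` on `G` by automorphisms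
preserving `S`, and an `A_m`-equivariant labelling of `S` by edges (2-element
subsets) of `{1,…,m}` such that generators with disjoint labels commute. -/
structure SimplexSetting (m : ℕ) (G : Type*) [Group G] where
  S : Finset G
  one_not_mem : (1 : G) ∉ S
  symm : ∀ s ∈ S, s⁻¹ ∈ S
  generates : Subgroup.closure (S : Set G) = ⊤
  act : alternatingGroup (Fin m) →* MulAut G
  act_mem : ∀ (σ : alternatingGroup (Fin m)), ∀ s ∈ S, act σ s ∈ S
  lbl : G → Finset (Fin m)
  lbl_card : ∀ s ∈ S, (lbl s).card = 2
  lbl_equivariant : ∀ (σ : alternatingGroup (Fin m)), ∀ s ∈ S,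
    lbl (act σ s) = (lbl s).image (σ : Equiv.Perm (Fin m))
  comm : ∀ s ∈ S, ∀ t ∈ S, Disjoint (lbl s) (lbl t) → Commute s t

namespace SimplexSetting

variable {m : ℕ} {G : Type*} [Group G] (P : SimplexSetting m G)

/-- The set `E_n` of edges of the simplex spanned by the first `n` vertices. -/
def edges (m n : ℕ) : Finset (Finset (Fin m)) :=
  Finset.univ.filter (fun e => e.card = 2 ∧ ∀ i ∈ e, (i : ℕ) < n)

/-- `S_e`: the generators labelled by the edge `e`. -/
def Se (e : Finset (Fin m)) : Finset G := P.S.filter (fun s => P.lbl s = e)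

/-- The edge Laplacian `Δ_e = |S_e|·1 - Σ_{t ∈ S_e} t`. -/
def De (e : Finset (Fin m)) : MonoidAlgebra ℝ G :=
  ((P.Se e).card : MonoidAlgebra ℝ G) - ∑ t ∈ P.Se e, MonoidAlgebra.of ℝ G t

/-- `Δ_n = Σ_{e ∈ E_n} Δ_e`. -/
def Dn (n : ℕ) : MonoidAlgebra ℝ G := ∑ e ∈ edges m n, P.De e

/-- `Sq_n = Σ_{e ∈ E_n} Δ_e²`. -/
def Sq (n : ℕ) : MonoidAlgebra ℝ G := ∑ e ∈ edges m n, (P.De e) ^ 2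

/-- `Adj_n`: the sum of `Δ_e Δ_f` over ordered pairs of edges of `E_n` sharing
exactly one vertex. -/
def Adj (n : ℕ) : MonoidAlgebra ℝ G :=
  ∑ e ∈ edges m n, ∑ f ∈ (edges m n).filter (fun f => (e ∩ f).card = 1), P.De e * P.De f

/-- `Op_n`: the sum of `Δ_e Δ_f` over ordered pairs of disjoint edges of `E_n`. -/
def Op (n : ℕ) : MonoidAlgebra ℝ G :=
  ∑ e ∈ edges m n, ∑ f ∈ (edges m n).filter (fun f => e ∩ f = ∅), P.De e * P.De f

/-- The induced action of `A_m` on the group algebra `ℝ[G]`. -/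
def algAct (σ : alternatingGroup (Fin m)) (x : MonoidAlgebra ℝ G) : MonoidAlgebra ℝ G :=
  MonoidAlgebra.mapDomain (P.act σ) x

/-- `h_n = (n-2)·(n-1)!/2`, as a real number. -/
def hr (n : ℕ) : ℝ := ((n : ℝ) - 2) * (Nat.factorial (n - 1)) / 2

end SimplexSetting

open SimplexSetting


section CountingLemmas

variable {m : ℕ}

/-- auxiliary: an even permutation sending `j` to `j'`. -/
lemma exists_even_perm_apply (hm : 4 ≤ m) (j j' : Fin m) :
    ∃ π ∈ alternatingGroup (Fin m), π j = j' := by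
  by_cases h : j = j'
  · exact ⟨1, Subgroup.one_mem _, h⟩
  · have hcard : 1 < (({j, j'} : Finset (Fin m))ᶜ).card := by
      have h2 : ({j, j'} : Finset (Fin m)).card ≤ 2 := Finset.card_insert_le _ _ |>.trans (by simp)
      have := Finset.card_compl ({j, j'} : Finset (Fin m))
      rw [this]
      simp only [Fintype.card_fin]
      omega
    obtain ⟨a, ha, b, hb, hab⟩ := Finset.one_lt_card.mp hcard
    simp only [Finset.mem_compl, Finset.mem_insert, Finset.mem_singleton, not_or] at ha hb
    refine ⟨Equiv.swap a b * Equiv.swap j j', ?_, ?_⟩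
    · rw [Equiv.Perm.mem_alternatingGroup, map_mul, Equiv.Perm.sign_swap hab,
        Equiv.Perm.sign_swap h]
      exact Int.units_mul_self (-1)
    · simp only [Equiv.Perm.mul_apply, Equiv.swap_apply_left]
      exact Equiv.swap_apply_of_ne_of_ne (Ne.symm ha.2) (Ne.symm hb.2)

lemma fiber_card_eq (hm : 4 ≤ m) (v : Fin m) (j j' : Fin m) :
    (Finset.univ.filter (fun σ : alternatingGroup (Fin m) => (σ : Equiv.Perm (Fin m)) v = j)).card
      = (Finset.univ.filter (fun σ : alternatingGroup (Fin m) =>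
          (σ : Equiv.Perm (Fin m)) v = j')).card := by
  obtain ⟨π, hπ, hπj⟩ := exists_even_perm_apply hm j j'
  refine Finset.card_bij' (fun σ _ => (⟨π, hπ⟩ : alternatingGroup (Fin m)) * σ)
    (fun σ _ => (⟨π, hπ⟩ : alternatingGroup (Fin m))⁻¹ * σ) ?_ ?_ ?_ ?_
  · intro σ hσ
    simp only [Finset.mem_filter, Finset.mem_univ, true_and] at hσ ⊢
    simp [Equiv.Perm.mul_apply, hσ, hπj]
  · intro σ hσ
    simp only [Finset.mem_filter, Finset.mem_univ, true_and] at hσ ⊢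
    have : π ((((⟨π, hπ⟩ : alternatingGroup (Fin m))⁻¹ * σ : alternatingGroup (Fin m)) :
        Equiv.Perm (Fin m)) v) = π (π⁻¹ (σ.1 v)) := by
      simp
    rw [hσ] at this
    have := this
    have hinj : Function.Injective π := π.injective
    apply hinj
    simpa [hπj] using this
  · intro σ _; simp [mul_assoc]
  · intro σ _; simp [mul_assoc]

lemma two_mul_fiber_card (hm : 4 ≤ m) (v : Fin m) (j : Fin m) :
    2 * (Finset.univ.filter (fun σ : alternatingGroup (Fin m) =>
        (σ : Equiv.Perm (Fin m)) v = j)).card = (m - 1).factorial := by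
  haveI : Nontrivial (Fin m) := Fin.nontrivial_iff_two_le.mpr (by omega)
  set C := (Finset.univ.filter (fun σ : alternatingGroup (Fin m) =>
      (σ : Equiv.Perm (Fin m)) v = j)).card with hC
  have hsum : (Finset.univ : Finset (alternatingGroup (Fin m))).card
      = ∑ k : Fin m, (Finset.univ.filter (fun σ : alternatingGroup (Fin m) =>
          (σ : Equiv.Perm (Fin m)) v = k)).card :=
    Finset.card_eq_sum_card_fiberwise (fun σ _ => Finset.mem_univ _)
  have hsame : ∀ k : Fin m, (Finset.univ.filter (fun σ : alternatingGroup (Fin m) =>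
      (σ : Equiv.Perm (Fin m)) v = k)).card = C := fun k => fiber_card_eq hm v k j
  rw [Finset.sum_congr rfl (fun k _ => hsame k)] at hsum
  simp only [Finset.sum_const, Finset.card_univ, Fintype.card_fin, smul_eq_mul] at hsum
  have hA : 2 * Fintype.card (alternatingGroup (Fin m)) = Fintype.card (Equiv.Perm (Fin m)) :=
    two_mul_card_alternatingGroup
  rw [Fintype.card_perm, Fintype.card_fin] at hA
  have hm' : m.factorial = m * (m-1).factorial := by
    conv_lhs => rw [show m = (m-1) + 1 by omega]
    rw [Nat.factorial_succ]
    congr 1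
    omega
  rw [hsum, hm'] at hA
  have h2 : m * (2 * C) = m * (m - 1).factorial := by rw [← hA]; ring
  exact Nat.eq_of_mul_eq_mul_left (by omega : 0 < m) h2

lemma two_mul_count_notin (hm : 4 ≤ m) (v : Fin m) (A : Finset (Fin m)) :
    2 * (Finset.univ.filter (fun σ : alternatingGroup (Fin m) =>
        (σ : Equiv.Perm (Fin m)) v ∉ A)).card = (m - A.card) * (m - 1).factorial := by
  have hsum : (Finset.univ.filter (fun σ : alternatingGroup (Fin m) =>
      (σ : Equiv.Perm (Fin m)) v ∉ A)).card
      = ∑ k ∈ Aᶜ, ((Finset.univ.filter (fun σ : alternatingGroup (Fin m) =>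
          (σ : Equiv.Perm (Fin m)) v ∉ A)).filter
            (fun σ : alternatingGroup (Fin m) => (σ : Equiv.Perm (Fin m)) v = k)).card :=
    Finset.card_eq_sum_card_fiberwise
      (f := fun σ : alternatingGroup (Fin m) => (σ : Equiv.Perm (Fin m)) v)
      (t := Aᶜ) (fun σ hσ => by
      rw [Finset.mem_coe, Finset.mem_filter] at hσ
      simpa using hσ.2)
  have hfib : ∀ k ∈ Aᶜ, ((Finset.univ.filter (fun σ : alternatingGroup (Fin m) =>
      (σ : Equiv.Perm (Fin m)) v ∉ A)).filter (fun σ : alternatingGroup (Fin m) => (σ : Equiv.Perm (Fin m)) v = k))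
      = Finset.univ.filter (fun σ : alternatingGroup (Fin m) =>
          (σ : Equiv.Perm (Fin m)) v = k) := by
    intro k hk
    rw [Finset.mem_compl] at hk
    ext σ
    simp only [Finset.mem_filter, Finset.mem_univ, true_and]
    constructor
    · rintro ⟨_, h⟩; exact h
    · intro h; exact ⟨by rw [h]; exact hk, h⟩
  rw [hsum, Finset.sum_congr rfl (fun k hk => congrArg Finset.card (hfib k hk)),
    Finset.mul_sum, Finset.sum_congr rfl (fun k _ => two_mul_fiber_card hm v k),
    Finset.sum_const, Finset.card_compl, Fintype.card_fin, smul_eq_mul]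

end CountingLemmas

namespace SimplexSetting

variable {m : ℕ} {G : Type*} [Group G] (P : SimplexSetting m G)

lemma act_injective (σ : alternatingGroup (Fin m)) : Function.Injective ⇑(P.act σ) :=
  (P.act σ).injective

lemma algAct_eq_ringHom (σ : alternatingGroup (Fin m)) :
    P.algAct σ = ⇑(MonoidAlgebra.mapDomainRingHom ℝ (P.act σ).toMonoidHom) := by
  funext x; rfl

lemma act_act_inv (σ : alternatingGroup (Fin m)) (t : G) : P.act σ (P.act σ⁻¹ t) = t := by
  rw [← MulAut.mul_apply, ← map_mul, mul_inv_cancel, map_one, MulAut.one_apply]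

lemma Se_image (σ : alternatingGroup (Fin m)) (e : Finset (Fin m)) :
    P.Se (e.image (σ : Equiv.Perm (Fin m))) = (P.Se e).image ⇑(P.act σ) := by
  ext t
  simp only [Se, Finset.mem_filter, Finset.mem_image]
  constructor
  · rintro ⟨htS, hlbl⟩
    refine ⟨P.act σ⁻¹ t, ⟨⟨P.act_mem σ⁻¹ t htS, ?_⟩, P.act_act_inv σ t⟩⟩
    rw [P.lbl_equivariant σ⁻¹ t htS, hlbl, Finset.image_image]
    have hfun : ⇑((σ⁻¹ : alternatingGroup (Fin m)) : Equiv.Perm (Fin m)) ∘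
        ⇑((σ : alternatingGroup (Fin m)) : Equiv.Perm (Fin m)) = id := by
      funext x
      simp
    rw [hfun, Finset.image_id]
  · rintro ⟨s, ⟨⟨hsS, hlbl⟩, rfl⟩⟩
    exact ⟨P.act_mem σ s hsS, by rw [P.lbl_equivariant σ s hsS, hlbl]⟩

lemma algAct_De (σ : alternatingGroup (Fin m)) (e : Finset (Fin m)) :
    P.algAct σ (P.De e) = P.De (e.image (σ : Equiv.Perm (Fin m))) := by
  rw [algAct_eq_ringHom]
  unfold De
  rw [map_sub, map_natCast, map_sum, Se_image,
    Finset.card_image_of_injective _ (P.act_injective σ),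
    Finset.sum_image (fun a _ b _ h => P.act_injective σ h)]
  congr 1
  refine Finset.sum_congr rfl fun t _ => ?_
  show MonoidAlgebra.mapDomain (⇑(P.act σ)) (MonoidAlgebra.single t 1) = _
  rw [MonoidAlgebra.mapDomain_single]
  rfl

lemma algAct_Dn (hm : 4 ≤ m) (σ : alternatingGroup (Fin m)) :
    P.algAct σ (P.Dn (m - 1)) =
      ∑ f ∈ (edges m m).filter
        (fun f => (σ : Equiv.Perm (Fin m)) ⟨m - 1, by omega⟩ ∉ f), P.De f := by
  have hL : ∀ i : Fin m, (i : ℕ) < m - 1 ↔ i ≠ ⟨m - 1, by omega⟩ := by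
    intro i
    constructor
    · intro h hcon
      rw [hcon] at h
      simp at h
    · intro h
      have := i.isLt
      rcases Nat.lt_or_ge (i : ℕ) (m - 1) with h' | h'
      · exact h'
      · exact absurd (Fin.ext (by omega : (i : ℕ) = m - 1)) h
  have himg : (edges m (m - 1)).image (fun e => e.image (σ : Equiv.Perm (Fin m)))
      = (edges m m).filter
        (fun f => (σ : Equiv.Perm (Fin m)) ⟨m - 1, by omega⟩ ∉ f) := by
    ext f
    simp only [Finset.mem_image, Finset.mem_filter, edges, Finset.mem_univ, true_and]
    constructor
    · rintro ⟨e, ⟨he2, helt⟩, rfl⟩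
      refine ⟨⟨Finset.card_image_of_injective _ (Equiv.injective _) |>.trans he2,
        fun i _ => i.isLt⟩, ?_⟩
      intro hcon
      rw [Finset.mem_image] at hcon
      obtain ⟨i, hi, hieq⟩ := hcon
      have : i = ⟨m - 1, by omega⟩ := Equiv.injective _ hieq
      have := (hL i).mp (helt i hi)
      exact this ‹i = _›
    · rintro ⟨⟨hf2, _⟩, hnot⟩
      refine ⟨f.image ⇑((σ : Equiv.Perm (Fin m))⁻¹), ⟨?_, ?_⟩, ?_⟩
      · exact Finset.card_image_of_injective _ (Equiv.injective _) |>.trans hf2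
      · intro i hi
        rw [Finset.mem_image] at hi
        obtain ⟨j, hj, rfl⟩ := hi
        rw [hL]
        intro hcon
        apply hnot
        rw [← hcon]
        simpa using hj
      · rw [Finset.image_image]
        have : ⇑(σ : Equiv.Perm (Fin m)) ∘ ⇑((σ : Equiv.Perm (Fin m))⁻¹) = id := by
          funext x; simp
        rw [this, Finset.image_id]
  rw [← himg]
  unfold Dn
  rw [algAct_eq_ringHom, map_sum,
    Finset.sum_image (f := fun e => P.De e)
      (fun a _ b _ h => (Finset.image_injective (Equiv.injective _)) h)]
  exact Finset.sum_congr rfl fun e _ => by rw [← algAct_eq_ringHom]; exact P.algAct_De σ e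

end SimplexSetting

/-- `X_m = α_m·Sq_m + β_m·Adj_m + γ_m·Op_m` with `α_m = h_m(h_m - 1)`,
`β_m = h_m(h_m - (m-3)/(m-2))`, `γ_m = h_m(h_m - (m-4)/(m-2))`. -/
theorem Xm_eq_combination {m : ℕ} {G : Type*} [Group G]
    (P : SimplexSetting m G) (hm : 4 ≤ m) :
    (∑ σ : alternatingGroup (Fin m),
        P.algAct σ (P.Dn (m - 1)) *
          ∑ τ ∈ Finset.univ.erase σ, P.algAct τ (P.Dn (m - 1))) =
      (hr m * (hr m - 1)) • P.Sq m +
      (hr m * (hr m - ((m : ℝ) - 3) / ((m : ℝ) - 2))) • P.Adj m +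
      (hr m * (hr m - ((m : ℝ) - 4) / ((m : ℝ) - 2))) • P.Op m := by
  classical
  have hm0 : 0 < m := by omega
  set L : Fin m := ⟨m - 1, by omega⟩ with hLdef
  set E : Finset (Finset (Fin m)) := edges m m with hEdef
  set u : alternatingGroup (Fin m) → MonoidAlgebra ℝ G :=
    fun σ => ∑ f ∈ E.filter (fun f => (σ : Equiv.Perm (Fin m)) L ∉ f), P.De f with hudef
  set n2 : Finset (Fin m) → ℕ := fun A =>
    (Finset.univ.filter (fun σ : alternatingGroup (Fin m) =>
      (σ : Equiv.Perm (Fin m)) L ∉ A)).card with hn2def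
  set w : Finset (Fin m) → Finset (Fin m) → ℝ :=
    fun f f' => (n2 f : ℝ) * (n2 f' : ℝ) - (n2 (f ∪ f') : ℝ) with hwdef
  set F : ℝ := ((m - 1).factorial : ℝ) with hFdef
  have hAct : ∀ σ : alternatingGroup (Fin m), P.algAct σ (P.Dn (m - 1)) = u σ :=
    fun σ => P.algAct_Dn hm σ
  have hn2' : ∀ A : Finset (Fin m), 2 * n2 A = (m - A.card) * (m - 1).factorial :=
    fun A => two_mul_count_notin hm L A
  -- real value of n2
  have key : ∀ (A : Finset (Fin m)) (c : ℕ), A.card = c → c ≤ m →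
      (n2 A : ℝ) = (((m : ℝ) - c) * F) / 2 := by
    intro A c hc hcm
    have h := hn2' A
    rw [hc] at h
    have h3 : ((2 * n2 A : ℕ) : ℝ) = (((m - c) * (m - 1).factorial : ℕ) : ℝ) := by
      rw [h]
    push_cast [Nat.cast_sub hcm] at h3
    linarith
  have hhr : hr m = ((m : ℝ) - 2) * F / 2 := rfl
  have hmR : (4 : ℝ) ≤ (m : ℝ) := by exact_mod_cast hm
  have hm2R : (m : ℝ) - 2 ≠ 0 := by linarith
  have hcardE : ∀ f ∈ E, Finset.card f = 2 := by
    intro f hf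
    rw [hEdef] at hf
    simp only [edges, Finset.mem_filter] at hf
    exact hf.2.1
  have hunion_le : ∀ f f' : Finset (Fin m), (f ∪ f').card ≤ m := by
    intro f f'
    refine le_trans (Finset.card_le_univ _) ?_
    simp
  have hn2E : ∀ f ∈ E, (n2 f : ℝ) = hr m := by
    intro f hf
    rw [key f 2 (hcardE f hf) (by omega), hhr]
    norm_num
  -- Step 1 : rewrite the LHS via u
  have step1 : (∑ σ : alternatingGroup (Fin m),
        P.algAct σ (P.Dn (m - 1)) *
          ∑ τ ∈ Finset.univ.erase σ, P.algAct τ (P.Dn (m - 1)))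
      = (∑ σ : alternatingGroup (Fin m), u σ) * (∑ τ : alternatingGroup (Fin m), u τ)
        - ∑ σ : alternatingGroup (Fin m), u σ * u σ := by
    have h1 : ∀ σ : alternatingGroup (Fin m),
        (∑ τ ∈ Finset.univ.erase σ, P.algAct τ (P.Dn (m - 1)))
          = (∑ τ : alternatingGroup (Fin m), u τ) - u σ := by
      intro σ
      rw [Finset.sum_congr rfl fun τ _ => hAct τ]
      exact Finset.sum_erase_eq_sub (Finset.mem_univ σ)
    calc (∑ σ : alternatingGroup (Fin m),
          P.algAct σ (P.Dn (m - 1)) *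
            ∑ τ ∈ Finset.univ.erase σ, P.algAct τ (P.Dn (m - 1)))
        = ∑ σ : alternatingGroup (Fin m),
            (u σ * (∑ τ : alternatingGroup (Fin m), u τ) - u σ * u σ) := by
          refine Finset.sum_congr rfl fun σ _ => ?_
          rw [hAct σ, h1 σ, mul_sub]
      _ = _ := by rw [Finset.sum_sub_distrib, ← Finset.sum_mul]
  -- A1
  have A1 : (∑ σ : alternatingGroup (Fin m), u σ) = ∑ f ∈ E, (n2 f : ℝ) • P.De f := by
    calc (∑ σ : alternatingGroup (Fin m), u σ)
        = ∑ σ : alternatingGroup (Fin m), ∑ f ∈ E,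
            if (σ : Equiv.Perm (Fin m)) L ∉ f then P.De f else 0 :=
          Finset.sum_congr rfl fun σ _ => Finset.sum_filter _ _
      _ = ∑ f ∈ E, ∑ σ : alternatingGroup (Fin m),
            if (σ : Equiv.Perm (Fin m)) L ∉ f then P.De f else 0 := Finset.sum_comm
      _ = ∑ f ∈ E, (n2 f : ℝ) • P.De f := by
          refine Finset.sum_congr rfl fun f _ => ?_
          rw [← Finset.sum_filter, Finset.sum_const, ← Nat.cast_smul_eq_nsmul ℝ]
  -- A2
  have hu2 : ∀ σ : alternatingGroup (Fin m), u σ * u σ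
      = ∑ f ∈ E, ∑ f' ∈ E,
          if (σ : Equiv.Perm (Fin m)) L ∉ f ∪ f' then P.De f * P.De f' else 0 := by
    intro σ
    rw [hudef]
    rw [Finset.sum_mul_sum, Finset.sum_filter]
    refine Finset.sum_congr rfl fun f _ => ?_
    by_cases hf : (σ : Equiv.Perm (Fin m)) L ∉ f
    · rw [if_pos hf, Finset.sum_filter]
      refine Finset.sum_congr rfl fun f' _ => ?_
      by_cases hf' : (σ : Equiv.Perm (Fin m)) L ∉ f'
      · rw [if_pos hf', if_pos (by simp only [Finset.mem_union, not_or]; tauto)]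
      · rw [if_neg hf', if_neg (by simp only [Finset.mem_union, not_or]; tauto)]
    · rw [if_neg hf, eq_comm]
      refine Finset.sum_eq_zero fun f' _ => ?_
      rw [if_neg (by simp only [Finset.mem_union, not_or]; tauto)]
  have A2 : (∑ σ : alternatingGroup (Fin m), u σ * u σ)
      = ∑ f ∈ E, ∑ f' ∈ E, (n2 (f ∪ f') : ℝ) • (P.De f * P.De f') := by
    rw [Finset.sum_congr rfl fun σ _ => hu2 σ, Finset.sum_comm]
    refine Finset.sum_congr rfl fun f _ => ?_
    rw [Finset.sum_comm]
    refine Finset.sum_congr rfl fun f' _ => ?_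
    rw [← Finset.sum_filter, Finset.sum_const, ← Nat.cast_smul_eq_nsmul ℝ]
  -- A3
  have A3 : (∑ σ : alternatingGroup (Fin m), u σ) * (∑ τ : alternatingGroup (Fin m), u τ)
      = ∑ f ∈ E, ∑ f' ∈ E, ((n2 f : ℝ) * (n2 f' : ℝ)) • (P.De f * P.De f') := by
    rw [A1, Finset.sum_mul_sum]
    exact Finset.sum_congr rfl fun f _ => Finset.sum_congr rfl fun f' _ =>
      smul_mul_smul_comm _ _ _ _
  have hcomb : (∑ σ : alternatingGroup (Fin m),
        P.algAct σ (P.Dn (m - 1)) *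
          ∑ τ ∈ Finset.univ.erase σ, P.algAct τ (P.Dn (m - 1)))
      = ∑ f ∈ E, ∑ f' ∈ E, w f f' • (P.De f * P.De f') := by
    rw [step1, A3, A2, ← Finset.sum_sub_distrib]
    refine Finset.sum_congr rfl fun f _ => ?_
    rw [← Finset.sum_sub_distrib]
    exact Finset.sum_congr rfl fun f' _ => (sub_smul _ _ _).symm
  -- coefficient evaluations
  have hw2 : ∀ f ∈ E, w f f = hr m * (hr m - 1) := by
    intro f hf
    rw [hwdef]
    simp only [Finset.union_self]
    rw [hn2E f hf]
    ring
  have hw1 : ∀ f ∈ E, ∀ f' ∈ E, (f ∩ f').card = 1 →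
      w f f' = hr m * (hr m - ((m : ℝ) - 3) / ((m : ℝ) - 2)) := by
    intro f hf f' hf' hint
    have hcu : (f ∪ f').card = 3 := by
      have := Finset.card_union_add_card_inter f f'
      rw [hint, hcardE f hf, hcardE f' hf'] at this
      omega
    rw [hwdef]
    simp only
    rw [hn2E f hf, hn2E f' hf', key (f ∪ f') 3 hcu (by omega), hhr]
    field_simp
    ring
  have hw0 : ∀ f ∈ E, ∀ f' ∈ E, f ∩ f' = ∅ →
      w f f' = hr m * (hr m - ((m : ℝ) - 4) / ((m : ℝ) - 2)) := by
    intro f hf f' hf' hint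
    have hcu : (f ∪ f').card = 4 := by
      have := Finset.card_union_add_card_inter f f'
      rw [hint, hcardE f hf, hcardE f' hf'] at this
      simpa using this
    rw [hwdef]
    simp only
    rw [hn2E f hf, hn2E f' hf', key (f ∪ f') 4 hcu (by omega), hhr]
    field_simp
    ring
  -- the splitting of the inner sum
  have split : ∀ f ∈ E, (∑ f' ∈ E, w f f' • (P.De f * P.De f'))
      = (hr m * (hr m - 1)) • (P.De f) ^ 2
        + (hr m * (hr m - ((m : ℝ) - 3) / ((m : ℝ) - 2))) •
            ∑ f' ∈ E.filter (fun f' => (f ∩ f').card = 1), P.De f * P.De f'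
        + (hr m * (hr m - ((m : ℝ) - 4) / ((m : ℝ) - 2))) •
            ∑ f' ∈ E.filter (fun f' => f ∩ f' = ∅), P.De f * P.De f' := by
    intro f hf
    have hf2 : f.card = 2 := hcardE f hf
    have hcard2 : ∀ f' ∈ E, (f ∩ f').card = 2 → f' = f := by
      intro f' hf' h2
      have e1 : f ∩ f' = f := Finset.eq_of_subset_of_card_le Finset.inter_subset_left
        (by rw [h2, hf2])
      have e2 : f ∩ f' = f' := Finset.eq_of_subset_of_card_le Finset.inter_subset_right
        (by rw [h2, hcardE f' hf'])
      rw [← e1, e2]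
    have hle2 : ∀ f' : Finset (Fin m), (f ∩ f').card ≤ 2 :=
      fun f' => le_trans (Finset.card_le_card Finset.inter_subset_left) (le_of_eq hf2)
    have e1 : (E.filter (fun f' => ¬f' = f)).filter (fun f' => (f ∩ f').card = 1)
        = E.filter (fun f' => (f ∩ f').card = 1) := by
      ext f'
      simp only [Finset.mem_filter]
      constructor
      · rintro ⟨⟨h1, _⟩, h3⟩
        exact ⟨h1, h3⟩
      · rintro ⟨h1, h3⟩
        refine ⟨⟨h1, fun hcon => ?_⟩, h3⟩
        rw [hcon, Finset.inter_self, hf2] at h3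
        omega
    have e0 : (E.filter (fun f' => ¬f' = f)).filter (fun f' => ¬(f ∩ f').card = 1)
        = E.filter (fun f' => f ∩ f' = ∅) := by
      ext f'
      simp only [Finset.mem_filter]
      constructor
      · rintro ⟨⟨h1, h2⟩, h3⟩
        refine ⟨h1, Finset.card_eq_zero.mp ?_⟩
        have hne2 : (f ∩ f').card ≠ 2 := fun hcon => h2 (hcard2 f' h1 hcon)
        have := hle2 f'
        omega
      · rintro ⟨h1, h0⟩
        have hc0 : (f ∩ f').card = 0 := by rw [h0]; simp
        refine ⟨⟨h1, fun hcon => ?_⟩, by omega⟩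
        rw [hcon, Finset.inter_self, hf2] at hc0
        omega
    have hsingle : E.filter (fun f' => f' = f) = {f} := by
      rw [Finset.filter_eq']
      exact if_pos hf
    rw [← Finset.sum_filter_add_sum_filter_not E (fun f' => f' = f)
        (fun f' => w f f' • (P.De f * P.De f')),
      ← Finset.sum_filter_add_sum_filter_not (E.filter (fun f' => ¬f' = f))
        (fun f' => (f ∩ f').card = 1) (fun f' => w f f' • (P.De f * P.De f')),
      e1, e0, hsingle, Finset.sum_singleton, add_assoc]
    congr 1
    · rw [hw2 f hf, sq]
    congr 1
    · rw [Finset.smul_sum]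
      exact Finset.sum_congr rfl fun f' hf' => by
        rw [hw1 f hf f' (Finset.mem_filter.mp hf').1 (Finset.mem_filter.mp hf').2]
    · rw [Finset.smul_sum]
      exact Finset.sum_congr rfl fun f' hf' => by
        rw [hw0 f hf f' (Finset.mem_filter.mp hf').1 (Finset.mem_filter.mp hf').2]
  -- conclusion
  rw [hcomb, Finset.sum_congr rfl split]
  rw [Finset.sum_add_distrib, Finset.sum_add_distrib]
  simp only [SimplexSetting.Sq, SimplexSetting.Adj, SimplexSetting.Op, Finset.smul_sum]
  rw [hEdef]

end
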